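/- Let V = k[[t]] be the formal power series ring over a field k, R = k[[t^3, t^8, t^13]] and S = k[[t^3, t^5]]. Then R is strictly closed in S, i.e., the strict closure of R in S equals R. -/

import Mathlib

open scoped TensorProduct

/-- The strict closure of `R` in `S`. -/
def strictClosure (R : Type*) [CommRing R] (S : Type*) [CommRing S] [Algebra R S] : Set S :=
  {α : S | α ⊗ₜ[R] (1 : S) = (1 : S) ⊗ₜ[R] α}

variable (k : Type*) [Field k]

/-- The subalgebra of `k[[t]]` consisting of power series supported on a submonoid `Γ ⊆ ℕ`.
For `Γ = ⟨3, 8, 13⟩` this is `k[[t³, t⁸, t¹³]]`, and for `Γ = ⟨3, 5⟩` it is `k[[t³, t⁵]]`. -/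
def PowerSeries.supportedIn (Γ : AddSubmonoid ℕ) : Subalgebra k (PowerSeries k) where
  carrier := {f | ∀ i : ℕ, i ∉ Γ → PowerSeries.coeff i f = 0}
  add_mem' := by
    intro f g hf hg i hi
    simp [hf i hi, hg i hi]
  mul_mem' := by
    intro f g hf hg i hi
    rw [PowerSeries.coeff_mul]
    refine Finset.sum_eq_zero fun p hp => ?_
    replace hp : p.1 + p.2 = i := Finset.HasAntidiagonal.mem_antidiagonal.mp hp
    by_cases h1 : p.1 ∈ Γ
    · by_cases h2 : p.2 ∈ Γ
      · exact absurd (hp ▸ add_mem h1 h2) hi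
      · rw [hg p.2 h2, mul_zero]
    · rw [hf p.1 h1, zero_mul]
  algebraMap_mem' := by
    intro c i hi
    have h0 : i ≠ 0 := fun h => hi (h ▸ zero_mem Γ)
    simp [PowerSeries.algebraMap_apply, PowerSeries.coeff_C, h0]

lemma supportedIn_mono {Γ₁ Γ₂ : AddSubmonoid ℕ} (h : Γ₁ ≤ Γ₂) :
    PowerSeries.supportedIn k Γ₁ ≤ PowerSeries.supportedIn k Γ₂ :=
  fun _ hf i hi => hf i fun hmem => hi (h hmem)

lemma closure_3_8_13_le : AddSubmonoid.closure ({3, 8, 13} : Set ℕ) ≤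
    AddSubmonoid.closure ({3, 5} : Set ℕ) := by
  rw [AddSubmonoid.closure_le]
  intro n hn
  have h3 : (3 : ℕ) ∈ AddSubmonoid.closure ({3, 5} : Set ℕ) :=
    AddSubmonoid.subset_closure (by simp)
  have h5 : (5 : ℕ) ∈ AddSubmonoid.closure ({3, 5} : Set ℕ) :=
    AddSubmonoid.subset_closure (by simp)
  rcases hn with h | h | h
  · exact h ▸ h3
  · exact h ▸ (show (8:ℕ) = 3 + 5 by norm_num) ▸ add_mem h3 h5
  · exact h ▸ (show (13:ℕ) = 3 + 5 + 5 by norm_num) ▸ add_mem (add_mem h3 h5) h5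

namespace StrictAux

open PowerSeries

abbrev ΓR : AddSubmonoid ℕ := AddSubmonoid.closure ({3, 8, 13} : Set ℕ)
abbrev ΓS : AddSubmonoid ℕ := AddSubmonoid.closure ({3, 5} : Set ℕ)

lemma memS {n : ℕ} (h : n ∈ ΓS) : n = 0 ∨ n = 3 ∨ n = 5 ∨ n = 6 ∨ 8 ≤ n := by
  induction h using AddSubmonoid.closure_induction with
  | mem x hx =>
    simp only [Set.mem_insert_iff, Set.mem_singleton_iff] at hx
    omega
  | zero => omega
  | add x y hx hy ihx ihy => omega

lemma memR {n : ℕ} (h : n ∈ ΓR) : n = 0 ∨ n = 3 ∨ n = 6 ∨ n = 8 ∨ n = 9 ∨ 11 ≤ n := by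
  induction h using AddSubmonoid.closure_induction with
  | mem x hx =>
    simp only [Set.mem_insert_iff, Set.mem_singleton_iff] at hx
    omega
  | zero => omega
  | add x y hx hy ihx ihy => omega

lemma mem_ΓR {n : ℕ} (h : n = 0 ∨ n = 3 ∨ n = 6 ∨ n = 8 ∨ n = 9 ∨ 11 ≤ n) : n ∈ ΓR := by
  have h3 : (3 : ℕ) ∈ ΓR := AddSubmonoid.subset_closure (by simp)
  have h8 : (8 : ℕ) ∈ ΓR := AddSubmonoid.subset_closure (by simp)
  have h13 : (13 : ℕ) ∈ ΓR := AddSubmonoid.subset_closure (by simp)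
  obtain ⟨a, b, c, rfl⟩ : ∃ a b c : ℕ, n = a * 3 + b * 8 + c * 13 := by
    rcases h with rfl | rfl | rfl | rfl | rfl | h
    · exact ⟨0, 0, 0, rfl⟩
    · exact ⟨1, 0, 0, rfl⟩
    · exact ⟨2, 0, 0, rfl⟩
    · exact ⟨0, 1, 0, rfl⟩
    · exact ⟨3, 0, 0, rfl⟩
    · by_cases h0 : n % 3 = 0
      · exact ⟨n / 3, 0, 0, by omega⟩
      · by_cases h1 : n % 3 = 1
        · exact ⟨(n - 13) / 3, 0, 1, by omega⟩
        · exact ⟨(n - 8) / 3, 1, 0, by omega⟩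
  exact add_mem (add_mem (by simpa [smul_eq_mul] using nsmul_mem h3 a)
    (by simpa [smul_eq_mul] using nsmul_mem h8 b))
    (by simpa [smul_eq_mul] using nsmul_mem h13 c)

lemma key {n i j : ℕ} (hn : n = 5 ∨ n = 10) (hi : i ∈ ΓR) (hj : j ∈ ΓS)
    (hij : i + j = n) : i = 0 := by
  have h1 := memR hi
  have h2 := memS hj
  omega

lemma coeff_mul_supported {n : ℕ} (hn : n = 5 ∨ n = 10) {r x : PowerSeries k}
    (hr : r ∈ PowerSeries.supportedIn k ΓR) (hx : x ∈ PowerSeries.supportedIn k ΓS) :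
    coeff n (r * x) = coeff 0 r * coeff n x := by
  rw [coeff_mul]
  refine Finset.sum_eq_single_of_mem (0, n) (by simp) ?_
  intro p hp hne
  replace hp : p.1 + p.2 = n := Finset.HasAntidiagonal.mem_antidiagonal.mp hp
  by_cases h1 : p.1 ∈ ΓR
  · by_cases h2 : p.2 ∈ ΓS
    · have hp1 : p.1 = 0 := key hn h1 h2 hp
      exact absurd (Prod.ext hp1 (by omega)) hne
    · rw [hx p.2 h2, mul_zero]
  · rw [hr p.1 h1, zero_mul]

end StrictAux


section Main

open PowerSeries StrictAux

set_option maxHeartbeats 1000000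
set_option synthInstance.maxHeartbeats 400000

theorem strictlyClosed_in_k_t3_t5 :
    letI R := PowerSeries.supportedIn k (AddSubmonoid.closure ({3, 8, 13} : Set ℕ))
    letI S := PowerSeries.supportedIn k (AddSubmonoid.closure ({3, 5} : Set ℕ))
    letI h : R ≤ S := supportedIn_mono k closure_3_8_13_le
    letI : Algebra ↥R ↥S := (Subalgebra.inclusion h).toRingHom.toAlgebra
    strictClosure ↥R ↥S = Set.range (algebraMap ↥R ↥S) := by
  letI : Algebra ↥(PowerSeries.supportedIn k ΓR) ↥(PowerSeries.supportedIn k ΓS) :=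
    (Subalgebra.inclusion (supportedIn_mono k closure_3_8_13_le)).toRingHom.toAlgebra
  letI ε : ↥(PowerSeries.supportedIn k ΓR) →+* k :=
    (PowerSeries.constantCoeff (R := k)).comp (Subalgebra.val (PowerSeries.supportedIn k ΓR)).toRingHom
  letI : Module ↥(PowerSeries.supportedIn k ΓR) k := ε.toModule
  ext α
  simp only [strictClosure, Set.mem_setOf_eq, Set.mem_range]
  constructor
  · intro hα
    have hsmul : ∀ (r : ↥(PowerSeries.supportedIn k ΓR)) (x : ↥(PowerSeries.supportedIn k ΓS)),
        ((r • x : ↥(PowerSeries.supportedIn k ΓS)) : PowerSeries k)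
          = (r : PowerSeries k) * (x : PowerSeries k) := by
      intro r x
      rw [Algebra.smul_def]
      rfl
    have vanish : ∀ n : ℕ, n = 5 ∨ n = 10 → coeff n (α : PowerSeries k) = 0 := by
      intro n hn
      letI B : ↥(PowerSeries.supportedIn k ΓS) →ₗ[↥(PowerSeries.supportedIn k ΓR)]
          ↥(PowerSeries.supportedIn k ΓS) →ₗ[↥(PowerSeries.supportedIn k ΓR)] k :=
        LinearMap.mk₂ ↥(PowerSeries.supportedIn k ΓR)
          (fun x y => coeff n (x : PowerSeries k) * coeff 0 (y : PowerSeries k))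
          (by intro x x' y; simp [add_mul])
          (by
            intro r x y
            have h1 : coeff n ((r • x : ↥(PowerSeries.supportedIn k ΓS)) : PowerSeries k)
                = coeff 0 (r : PowerSeries k) * coeff n (x : PowerSeries k) := by
              rw [hsmul]
              exact coeff_mul_supported k hn r.2 x.2
            show coeff n ((r • x : ↥(PowerSeries.supportedIn k ΓS)) : PowerSeries k) * _
                = ε r * _
            rw [h1]
            show coeff 0 (r : PowerSeries k) * coeff n (x : PowerSeries k)
                  * coeff 0 (y : PowerSeries k)
                = constantCoeff (r : PowerSeries k)
                  * (coeff n (x : PowerSeries k) * coeff 0 (y : PowerSeries k))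
            rw [coeff_zero_eq_constantCoeff]
            ring)
          (by intro x y y'; simp [mul_add])
          (by
            intro r x y
            have h1 : coeff 0 ((r • y : ↥(PowerSeries.supportedIn k ΓS)) : PowerSeries k)
                = coeff 0 (r : PowerSeries k) * coeff 0 (y : PowerSeries k) := by
              rw [hsmul]
              simp [coeff_zero_eq_constantCoeff, map_mul]
            show _ * coeff 0 ((r • y : ↥(PowerSeries.supportedIn k ΓS)) : PowerSeries k)
                = ε r * _
            rw [h1]
            show coeff n (x : PowerSeries k)
                  * (coeff 0 (r : PowerSeries k) * coeff 0 (y : PowerSeries k))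
                = constantCoeff (r : PowerSeries k)
                  * (coeff n (x : PowerSeries k) * coeff 0 (y : PowerSeries k))
            rw [coeff_zero_eq_constantCoeff]
            ring)
      letI L := TensorProduct.lift B
      have hL := congrArg L hα
      have e1 : L (α ⊗ₜ (1 : ↥(PowerSeries.supportedIn k ΓS)))
          = coeff n (α : PowerSeries k) := by
        have h1 : ((1 : ↥(PowerSeries.supportedIn k ΓS)) : PowerSeries k) = 1 := rfl
        simp [L, B, TensorProduct.lift.tmul, LinearMap.mk₂_apply, h1]
      have e2 : L ((1 : ↥(PowerSeries.supportedIn k ΓS)) ⊗ₜ α) = 0 := by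
        have h2 : ((1 : ↥(PowerSeries.supportedIn k ΓS)) : PowerSeries k) = 1 := rfl
        simp only [L, TensorProduct.lift.tmul]
        simp only [B, LinearMap.mk₂_apply, h2, coeff_one]
        rcases hn with rfl | rfl <;> simp
      rw [e1, e2] at hL
      exact hL
    have hmem : (α : PowerSeries k) ∈ PowerSeries.supportedIn k ΓR := by
      intro i hi
      by_cases hiS : i ∈ ΓS
      · refine vanish i ?_
        have h1 := memS hiS
        have h2 : ¬ (i = 0 ∨ i = 3 ∨ i = 6 ∨ i = 8 ∨ i = 9 ∨ 11 ≤ i) :=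
          fun hc => hi (mem_ΓR hc)
        omega
      · exact α.2 i hiS
    exact ⟨⟨(α : PowerSeries k), hmem⟩, Subtype.ext rfl⟩
  · rintro ⟨r, rfl⟩
    rw [Algebra.algebraMap_eq_smul_one]
    exact TensorProduct.smul_tmul r (1 : ↥(PowerSeries.supportedIn k ΓS))
      (1 : ↥(PowerSeries.supportedIn k ΓS))

end Main
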